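/- arXiv:2412.10952 — 2 statements merged into one kernel-verified Lean document; each statement's English description precedes it below -/
import Mathlib

section
/- Let ι : C → C̃ = C ⊕ X be an extension of cocommutative coalgebras (as above) and m : C → Hom(A⊗A,A) convolution-associative. A linear map m̃ : C̃ → Hom(A⊗A,A) with m̃∘ι = m is convolution-associative (m̃*(m̃⊗A) = m̃*(A⊗m̃)) if and only if m̃_X := m̃|_X satisfies the generalized Maurer–Cartan equation d_X^2(m̃_X) + ζ = 0. -/
open TensorProduct

noncomputable section

namespace DefCx2

variable {k : Type*} [Field k]
variable {A : Type*} [AddCommGroup A] [Module k A]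
variable {C : Type*} [AddCommGroup C] [Module k C] [Coalgebra k C]
variable {X : Type*} [AddCommGroup X] [Module k X]

/-- Convolution-associativity of `μ : D → Hom(A⊗A, A)` with respect to an (explicitly
given) comultiplication `Δ` on `D`:
`Σ μ(d₍₁₎)∘(μ(d₍₂₎)⊗A) = Σ μ(d₍₁₎)∘(A⊗μ(d₍₂₎))` as maps `(A⊗A)⊗A → A`. -/
def ConvAssocWith {D : Type*} [AddCommGroup D] [Module k D]
    (Δ : D →ₗ[k] D ⊗[k] D) (μ : D →ₗ[k] (A ⊗[k] A →ₗ[k] A)) : Prop :=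
  TensorProduct.lift (LinearMap.mk₂ k
      (fun d d' => (μ d) ∘ₗ LinearMap.rTensor A (μ d'))
      (by intro x y c; simp [map_add, LinearMap.add_comp])
      (by intro r x c; simp [map_smul, LinearMap.smul_comp])
      (by intro x c c'; simp [map_add, LinearMap.rTensor_add, LinearMap.comp_add])
      (by intro r x c; simp [map_smul, LinearMap.rTensor_smul, LinearMap.comp_smul])) ∘ₗ Δ
  =
  TensorProduct.lift (LinearMap.mk₂ k
      (fun d d' => (μ d) ∘ₗ LinearMap.lTensor A (μ d') ∘ₗ
        (TensorProduct.assoc k A A A).toLinearMap)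
      (by intro x y c; simp [map_add, LinearMap.add_comp])
      (by intro r x c; simp [map_smul, LinearMap.smul_comp])
      (by intro x c c'
          simp [map_add, LinearMap.lTensor_add, LinearMap.comp_add, LinearMap.add_comp])
      (by intro r x c
          simp [map_smul, LinearMap.lTensor_smul, LinearMap.comp_smul,
            LinearMap.smul_comp])) ∘ₗ Δ

/-- The degree-2 differential
`d²(ν)(x) = Σ m(x₍1₎)∘(A⊗ν(x₍0₎)) − Σ ν(x₍0₎)∘(m(x₍1₎)⊗A) + Σ ν(x₍0₎)∘(A⊗m(x₍1₎))
 − Σ m(x₍1₎)∘(ν(x₍0₎)⊗A)` as maps `(A⊗A)⊗A → A`. -/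
def d2 (ρ : X →ₗ[k] X ⊗[k] C) (m : C →ₗ[k] (A ⊗[k] A →ₗ[k] A))
    (ν : X →ₗ[k] (A ⊗[k] A →ₗ[k] A)) :
    X →ₗ[k] ((A ⊗[k] A) ⊗[k] A →ₗ[k] A) :=
  TensorProduct.lift (LinearMap.mk₂ k
    (fun x c =>
      (m c) ∘ₗ LinearMap.lTensor A (ν x) ∘ₗ (TensorProduct.assoc k A A A).toLinearMap
      - (ν x) ∘ₗ LinearMap.rTensor A (m c)
      + (ν x) ∘ₗ LinearMap.lTensor A (m c) ∘ₗ (TensorProduct.assoc k A A A).toLinearMap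
      - (m c) ∘ₗ LinearMap.rTensor A (ν x))
    (by intro x y c
        simp [map_add, LinearMap.lTensor_add, LinearMap.rTensor_add, LinearMap.add_comp,
          LinearMap.comp_add]
        abel)
    (by intro r x c
        simp [map_smul, LinearMap.lTensor_smul, LinearMap.rTensor_smul,
          LinearMap.smul_comp, LinearMap.comp_smul, smul_sub, smul_add])
    (by intro x c c'
        simp [map_add, LinearMap.lTensor_add, LinearMap.rTensor_add, LinearMap.add_comp,
          LinearMap.comp_add]
        abel)
    (by intro r x c
        simp [map_smul, LinearMap.lTensor_smul, LinearMap.rTensor_smul,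
          LinearMap.smul_comp, LinearMap.comp_smul, smul_sub, smul_add])) ∘ₗ ρ

/-- The identification `((A⊗A)⊗A)⊗A ≃ A⊗((A⊗A)⊗A)`. -/
def eA4first : (((A ⊗[k] A) ⊗[k] A) ⊗[k] A) ≃ₗ[k] A ⊗[k] ((A ⊗[k] A) ⊗[k] A) :=
  ((TensorProduct.assoc k (A ⊗[k] A) A A).trans
    (TensorProduct.assoc k A A (A ⊗[k] A))).trans
      (TensorProduct.congr (LinearEquiv.refl k A) (TensorProduct.assoc k A A A).symm)

/-- The degree-3 differential `d³ = Σ_{i=0}^{4} (−1)^i d_i³` of the complex `C_X^*(A,m)`,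
as maps `((A⊗A)⊗A)⊗A → A`. -/
def d3 (ρ : X →ₗ[k] X ⊗[k] C) (m : C →ₗ[k] (A ⊗[k] A →ₗ[k] A))
    (ν : X →ₗ[k] ((A ⊗[k] A) ⊗[k] A →ₗ[k] A)) :
    X →ₗ[k] (((A ⊗[k] A) ⊗[k] A) ⊗[k] A →ₗ[k] A) :=
  TensorProduct.lift (LinearMap.mk₂ k
    (fun x c =>
      (m c) ∘ₗ LinearMap.lTensor A (ν x) ∘ₗ (eA4first (k := k) (A := A)).toLinearMap
      - (ν x) ∘ₗ LinearMap.rTensor A (LinearMap.rTensor A (m c))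
      + (ν x) ∘ₗ LinearMap.rTensor A (LinearMap.lTensor A (m c)) ∘ₗ
          (TensorProduct.congr (TensorProduct.assoc k A A A)
            (LinearEquiv.refl k A)).toLinearMap
      - (ν x) ∘ₗ LinearMap.lTensor (A ⊗[k] A) (m c) ∘ₗ
          (TensorProduct.assoc k (A ⊗[k] A) A A).toLinearMap
      + (m c) ∘ₗ LinearMap.rTensor A (ν x))
    (by intro x y c
        simp [map_add, LinearMap.lTensor_add, LinearMap.rTensor_add, LinearMap.add_comp,
          LinearMap.comp_add]
        abel)
    (by intro r x c
        simp [map_smul, LinearMap.lTensor_smul, LinearMap.rTensor_smul,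
          LinearMap.smul_comp, LinearMap.comp_smul, smul_sub, smul_add])
    (by intro x c c'
        simp [map_add, LinearMap.lTensor_add, LinearMap.rTensor_add, LinearMap.add_comp,
          LinearMap.comp_add]
        abel)
    (by intro r x c
        simp [map_smul, LinearMap.lTensor_smul, LinearMap.rTensor_smul,
          LinearMap.smul_comp, LinearMap.comp_smul, smul_sub, smul_add])) ∘ₗ ρ

/-- The obstruction
`ζ(x) = Σ m(ω₁(x))∘(A⊗m(ω₂(x))) − Σ m(ω₁(x))∘(m(ω₂(x))⊗A)` as maps `(A⊗A)⊗A → A`. -/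
def zeta (ω : X →ₗ[k] C ⊗[k] C) (m : C →ₗ[k] (A ⊗[k] A →ₗ[k] A)) :
    X →ₗ[k] ((A ⊗[k] A) ⊗[k] A →ₗ[k] A) :=
  TensorProduct.lift (LinearMap.mk₂ k
    (fun c c' =>
      (m c) ∘ₗ LinearMap.lTensor A (m c') ∘ₗ (TensorProduct.assoc k A A A).toLinearMap
      - (m c) ∘ₗ LinearMap.rTensor A (m c'))
    (by intro x y c; simp [map_add, LinearMap.add_comp]; abel)
    (by intro r x c; simp [map_smul, LinearMap.smul_comp, smul_sub])
    (by intro x c c'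
        simp [map_add, LinearMap.lTensor_add, LinearMap.rTensor_add, LinearMap.comp_add,
          LinearMap.add_comp]
        abel)
    (by intro r x c
        simp [map_smul, LinearMap.lTensor_smul, LinearMap.rTensor_smul,
          LinearMap.comp_smul, LinearMap.smul_comp, smul_sub])) ∘ₗ ω

/-- The comultiplication on `C̃ = C ⊕ X` built from the comultiplication of `C`, a
symmetric coaction `ρ` on `X` and a symmetric 2-cocycle `ω : X → C ⊗ C`. -/
def extComul (ρ : X →ₗ[k] X ⊗[k] C) (ω : X →ₗ[k] C ⊗[k] C) :
    (C × X) →ₗ[k] (C × X) ⊗[k] (C × X) :=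
  TensorProduct.map (LinearMap.inl k C X) (LinearMap.inl k C X) ∘ₗ
      (Coalgebra.comul : C →ₗ[k] C ⊗[k] C) ∘ₗ LinearMap.fst k C X
    + TensorProduct.map (LinearMap.inl k C X) (LinearMap.inr k C X) ∘ₗ
      ((TensorProduct.comm k X C).toLinearMap ∘ₗ ρ) ∘ₗ LinearMap.snd k C X
    + TensorProduct.map (LinearMap.inr k C X) (LinearMap.inl k C X) ∘ₗ
      ρ ∘ₗ LinearMap.snd k C X
    + TensorProduct.map (LinearMap.inl k C X) (LinearMap.inl k C X) ∘ₗ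
      ω ∘ₗ LinearMap.snd k C X

end DefCx2

end
noncomputable section MCAux

namespace DefCx2

variable {k : Type*} [Field k]
variable {A : Type*} [AddCommGroup A] [Module k A]
variable {C : Type*} [AddCommGroup C] [Module k C] [Coalgebra k C]
variable {X : Type*} [AddCommGroup X] [Module k X]

/-- Left convolution bilinear lift. -/
def convL {D : Type*} [AddCommGroup D] [Module k D]
    (μ : D →ₗ[k] (A ⊗[k] A →ₗ[k] A)) :
    D ⊗[k] D →ₗ[k] ((A ⊗[k] A) ⊗[k] A →ₗ[k] A) :=
  TensorProduct.lift (LinearMap.mk₂ k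
      (fun d d' => (μ d) ∘ₗ LinearMap.rTensor A (μ d'))
      (by intro x y c; simp [map_add, LinearMap.add_comp])
      (by intro r x c; simp [map_smul, LinearMap.smul_comp])
      (by intro x c c'; simp [map_add, LinearMap.rTensor_add, LinearMap.comp_add])
      (by intro r x c; simp [map_smul, LinearMap.rTensor_smul, LinearMap.comp_smul]))

/-- Right convolution bilinear lift. -/
def convR {D : Type*} [AddCommGroup D] [Module k D]
    (μ : D →ₗ[k] (A ⊗[k] A →ₗ[k] A)) :
    D ⊗[k] D →ₗ[k] ((A ⊗[k] A) ⊗[k] A →ₗ[k] A) :=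
  TensorProduct.lift (LinearMap.mk₂ k
      (fun d d' => (μ d) ∘ₗ LinearMap.lTensor A (μ d') ∘ₗ
        (TensorProduct.assoc k A A A).toLinearMap)
      (by intro x y c; simp [map_add, LinearMap.add_comp])
      (by intro r x c; simp [map_smul, LinearMap.smul_comp])
      (by intro x c c'
          simp [map_add, LinearMap.lTensor_add, LinearMap.comp_add, LinearMap.add_comp])
      (by intro r x c
          simp [map_smul, LinearMap.lTensor_smul, LinearMap.comp_smul,
            LinearMap.smul_comp]))

lemma convAssocWith_iff {D : Type*} [AddCommGroup D] [Module k D]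
    (Δ : D →ₗ[k] D ⊗[k] D) (μ : D →ₗ[k] (A ⊗[k] A →ₗ[k] A)) :
    ConvAssocWith Δ μ ↔ convL μ ∘ₗ Δ = convR μ ∘ₗ Δ := Iff.rfl

@[simp] lemma convL_tmul {D : Type*} [AddCommGroup D] [Module k D]
    (μ : D →ₗ[k] (A ⊗[k] A →ₗ[k] A)) (d d' : D) :
    convL μ (d ⊗ₜ[k] d') = (μ d) ∘ₗ LinearMap.rTensor A (μ d') := rfl

@[simp] lemma convR_tmul {D : Type*} [AddCommGroup D] [Module k D]
    (μ : D →ₗ[k] (A ⊗[k] A →ₗ[k] A)) (d d' : D) :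
    convR μ (d ⊗ₜ[k] d') = (μ d) ∘ₗ LinearMap.lTensor A (μ d') ∘ₗ
      (TensorProduct.assoc k A A A).toLinearMap := rfl

/-- The bilinear lift underlying `d2`. -/
def d2lift (m : C →ₗ[k] (A ⊗[k] A →ₗ[k] A)) (ν : X →ₗ[k] (A ⊗[k] A →ₗ[k] A)) :
    X ⊗[k] C →ₗ[k] ((A ⊗[k] A) ⊗[k] A →ₗ[k] A) :=
  TensorProduct.lift (LinearMap.mk₂ k
    (fun x c =>
      (m c) ∘ₗ LinearMap.lTensor A (ν x) ∘ₗ (TensorProduct.assoc k A A A).toLinearMap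
      - (ν x) ∘ₗ LinearMap.rTensor A (m c)
      + (ν x) ∘ₗ LinearMap.lTensor A (m c) ∘ₗ (TensorProduct.assoc k A A A).toLinearMap
      - (m c) ∘ₗ LinearMap.rTensor A (ν x))
    (by intro x y c
        simp [map_add, LinearMap.lTensor_add, LinearMap.rTensor_add, LinearMap.add_comp,
          LinearMap.comp_add]
        abel)
    (by intro r x c
        simp [map_smul, LinearMap.lTensor_smul, LinearMap.rTensor_smul,
          LinearMap.smul_comp, LinearMap.comp_smul, smul_sub, smul_add])
    (by intro x c c'
        simp [map_add, LinearMap.lTensor_add, LinearMap.rTensor_add, LinearMap.add_comp,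
          LinearMap.comp_add]
        abel)
    (by intro r x c
        simp [map_smul, LinearMap.lTensor_smul, LinearMap.rTensor_smul,
          LinearMap.smul_comp, LinearMap.comp_smul, smul_sub, smul_add]))

lemma d2_eq (ρ : X →ₗ[k] X ⊗[k] C) (m : C →ₗ[k] (A ⊗[k] A →ₗ[k] A))
    (ν : X →ₗ[k] (A ⊗[k] A →ₗ[k] A)) : d2 ρ m ν = d2lift m ν ∘ₗ ρ := rfl

@[simp] lemma d2lift_tmul (m : C →ₗ[k] (A ⊗[k] A →ₗ[k] A))
    (ν : X →ₗ[k] (A ⊗[k] A →ₗ[k] A)) (x : X) (c : C) :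
    d2lift m ν (x ⊗ₜ[k] c) =
      (m c) ∘ₗ LinearMap.lTensor A (ν x) ∘ₗ (TensorProduct.assoc k A A A).toLinearMap
      - (ν x) ∘ₗ LinearMap.rTensor A (m c)
      + (ν x) ∘ₗ LinearMap.lTensor A (m c) ∘ₗ (TensorProduct.assoc k A A A).toLinearMap
      - (m c) ∘ₗ LinearMap.rTensor A (ν x) := rfl

/-- The bilinear lift underlying `zeta`. -/
def zetalift (m : C →ₗ[k] (A ⊗[k] A →ₗ[k] A)) :
    C ⊗[k] C →ₗ[k] ((A ⊗[k] A) ⊗[k] A →ₗ[k] A) :=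
  TensorProduct.lift (LinearMap.mk₂ k
    (fun c c' =>
      (m c) ∘ₗ LinearMap.lTensor A (m c') ∘ₗ (TensorProduct.assoc k A A A).toLinearMap
      - (m c) ∘ₗ LinearMap.rTensor A (m c'))
    (by intro x y c; simp [map_add, LinearMap.add_comp]; abel)
    (by intro r x c; simp [map_smul, LinearMap.smul_comp, smul_sub])
    (by intro x c c'
        simp [map_add, LinearMap.lTensor_add, LinearMap.rTensor_add, LinearMap.comp_add,
          LinearMap.add_comp]
        abel)
    (by intro r x c
        simp [map_smul, LinearMap.lTensor_smul, LinearMap.rTensor_smul,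
          LinearMap.comp_smul, LinearMap.smul_comp, smul_sub]))

lemma zeta_eq (ω : X →ₗ[k] C ⊗[k] C) (m : C →ₗ[k] (A ⊗[k] A →ₗ[k] A)) :
    zeta ω m = zetalift m ∘ₗ ω := rfl

@[simp] lemma zetalift_tmul (m : C →ₗ[k] (A ⊗[k] A →ₗ[k] A)) (c c' : C) :
    zetalift m (c ⊗ₜ[k] c') =
      (m c) ∘ₗ LinearMap.lTensor A (m c') ∘ₗ (TensorProduct.assoc k A A A).toLinearMap
      - (m c) ∘ₗ LinearMap.rTensor A (m c') := rfl

end DefCx2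

end MCAux
open DefCx2 in
/-- Let `ι : C → C̃ = C ⊕ X` be an extension of cocommutative coalgebras
and `m : C → Hom(A⊗A,A)` convolution-associative. A linear map `m̃ : C̃ → Hom(A⊗A,A)`
with `m̃ ∘ ι = m` is convolution-associative if and only if `m̃_X := m̃|_X` satisfies the
generalized Maurer–Cartan equation `d_X^2(m̃_X) + ζ = 0`. -/
theorem maurer_cartan_characterization {k : Type*} [Field k] {A C X : Type*}
    [AddCommGroup A] [Module k A]
    [AddCommGroup C] [Module k C] [Coalgebra k C]
    [AddCommGroup X] [Module k X]
    (hcocomm : (TensorProduct.comm k C C).toLinearMap ∘ₗ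
      (Coalgebra.comul : C →ₗ[k] C ⊗[k] C) = Coalgebra.comul)
    (ρ : X →ₗ[k] X ⊗[k] C)
    (hcoassoc : (TensorProduct.assoc k X C C).toLinearMap ∘ₗ LinearMap.rTensor C ρ ∘ₗ ρ =
      LinearMap.lTensor X (Coalgebra.comul : C →ₗ[k] C ⊗[k] C) ∘ₗ ρ)
    (hcounit : (TensorProduct.rid k X).toLinearMap ∘ₗ
      LinearMap.lTensor X (Coalgebra.counit : C →ₗ[k] k) ∘ₗ ρ = LinearMap.id)
    (ω : X →ₗ[k] C ⊗[k] C)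
    (hsymm : (TensorProduct.comm k C C).toLinearMap ∘ₗ ω = ω)
    (hnorm₁ : (TensorProduct.lid k C).toLinearMap ∘ₗ
      LinearMap.rTensor C (Coalgebra.counit : C →ₗ[k] k) ∘ₗ ω = 0)
    (hnorm₂ : (TensorProduct.rid k C).toLinearMap ∘ₗ
      LinearMap.lTensor C (Coalgebra.counit : C →ₗ[k] k) ∘ₗ ω = 0)
    (hcocycle : LinearMap.lTensor C ω ∘ₗ ((TensorProduct.comm k X C).toLinearMap ∘ₗ ρ)
      - (TensorProduct.assoc k C C C).toLinearMap ∘ₗ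
          LinearMap.rTensor C (Coalgebra.comul : C →ₗ[k] C ⊗[k] C) ∘ₗ ω
      + LinearMap.lTensor C (Coalgebra.comul : C →ₗ[k] C ⊗[k] C) ∘ₗ ω
      - (TensorProduct.assoc k C C C).toLinearMap ∘ₗ LinearMap.rTensor C ω ∘ₗ ρ = 0)
    (m : C →ₗ[k] (A ⊗[k] A →ₗ[k] A))
    (hm : ConvAssocWith (Coalgebra.comul : C →ₗ[k] C ⊗[k] C) m)
    (mt : (C × X) →ₗ[k] (A ⊗[k] A →ₗ[k] A))
    (hrestrict : mt ∘ₗ LinearMap.inl k C X = m) :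
    ConvAssocWith (extComul ρ ω) mt ↔
      d2 ρ m (mt ∘ₗ LinearMap.inr k C X) + zeta ω m = 0 := by
  set ν := mt ∘ₗ LinearMap.inr k C X with hν
  have hmc : ∀ c : C, mt (c, 0) = m c := fun c => LinearMap.congr_fun hrestrict c
  have hmx : ∀ x : X, mt (0, x) = ν x := fun x => rfl
  -- mt on the C-part behaves like m
  have lemA : convL mt ∘ₗ TensorProduct.map (LinearMap.inl k C X) (LinearMap.inl k C X)
      = convL m := by
    apply TensorProduct.ext'
    intro c c'
    simp [hmc]
  have lemA' : convR mt ∘ₗ TensorProduct.map (LinearMap.inl k C X) (LinearMap.inl k C X)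
      = convR m := by
    apply TensorProduct.ext'
    intro c c'
    simp [hmc]
  have lemB : convL m - convR m = - zetalift m := by
    apply TensorProduct.ext'
    intro c c'
    simp only [LinearMap.sub_apply, LinearMap.neg_apply, convL_tmul, convR_tmul,
      zetalift_tmul]
    abel
  have lemC : convL mt ∘ₗ (TensorProduct.map (LinearMap.inl k C X) (LinearMap.inr k C X)
        ∘ₗ (TensorProduct.comm k X C).toLinearMap)
      + convL mt ∘ₗ TensorProduct.map (LinearMap.inr k C X) (LinearMap.inl k C X)
      - convR mt ∘ₗ (TensorProduct.map (LinearMap.inl k C X) (LinearMap.inr k C X)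
        ∘ₗ (TensorProduct.comm k X C).toLinearMap)
      - convR mt ∘ₗ TensorProduct.map (LinearMap.inr k C X) (LinearMap.inl k C X)
      = - d2lift m ν := by
    apply TensorProduct.ext'
    intro x c
    simp only [LinearMap.sub_apply, LinearMap.add_apply, LinearMap.neg_apply,
      LinearMap.comp_apply, TensorProduct.comm_tmul, TensorProduct.map_tmul,
      LinearMap.inl_apply, LinearMap.inr_apply, LinearEquiv.coe_coe, convL_tmul, convR_tmul, d2lift_tmul,
      hmc, hmx]
    abel
  have hExt : ∀ (c : C) (x : X), extComul ρ ω (c, x)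
      = TensorProduct.map (LinearMap.inl k C X) (LinearMap.inl k C X)
          ((Coalgebra.comul : C →ₗ[k] C ⊗[k] C) c)
        + TensorProduct.map (LinearMap.inl k C X) (LinearMap.inr k C X)
            ((TensorProduct.comm k X C) (ρ x))
        + TensorProduct.map (LinearMap.inr k C X) (LinearMap.inl k C X) (ρ x)
        + TensorProduct.map (LinearMap.inl k C X) (LinearMap.inl k C X) (ω x) := by
    intro c x
    simp [extComul]
  have hm' : convL m ∘ₗ (Coalgebra.comul : C →ₗ[k] C ⊗[k] C)
      = convR m ∘ₗ (Coalgebra.comul : C →ₗ[k] C ⊗[k] C) := hm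
  have main : ∀ (c : C) (x : X),
      convL mt (extComul ρ ω (c, x)) - convR mt (extComul ρ ω (c, x))
        = -((d2 ρ m ν + zeta ω m) x) := by
    intro c x
    have h1 : convL mt (TensorProduct.map (LinearMap.inl k C X) (LinearMap.inl k C X)
        ((Coalgebra.comul : C →ₗ[k] C ⊗[k] C) c))
        = convL m ((Coalgebra.comul : C →ₗ[k] C ⊗[k] C) c) := by
      simpa using LinearMap.congr_fun lemA ((Coalgebra.comul : C →ₗ[k] C ⊗[k] C) c)
    have h1' : convR mt (TensorProduct.map (LinearMap.inl k C X) (LinearMap.inl k C X)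
        ((Coalgebra.comul : C →ₗ[k] C ⊗[k] C) c))
        = convR m ((Coalgebra.comul : C →ₗ[k] C ⊗[k] C) c) := by
      simpa using LinearMap.congr_fun lemA' ((Coalgebra.comul : C →ₗ[k] C ⊗[k] C) c)
    have h2 : convL mt (TensorProduct.map (LinearMap.inl k C X) (LinearMap.inl k C X)
        (ω x)) = convL m (ω x) := by
      simpa using LinearMap.congr_fun lemA (ω x)
    have h2' : convR mt (TensorProduct.map (LinearMap.inl k C X) (LinearMap.inl k C X)
        (ω x)) = convR m (ω x) := by
      simpa using LinearMap.congr_fun lemA' (ω x)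
    have h3 : convL mt (TensorProduct.map (LinearMap.inl k C X) (LinearMap.inr k C X)
          ((TensorProduct.comm k X C) (ρ x)))
        + convL mt (TensorProduct.map (LinearMap.inr k C X) (LinearMap.inl k C X) (ρ x))
        - convR mt (TensorProduct.map (LinearMap.inl k C X) (LinearMap.inr k C X)
          ((TensorProduct.comm k X C) (ρ x)))
        - convR mt (TensorProduct.map (LinearMap.inr k C X) (LinearMap.inl k C X) (ρ x))
        = - d2lift m ν (ρ x) := by
      simpa using LinearMap.congr_fun lemC (ρ x)
    have hB' : convL m (ω x) - convR m (ω x) = - zetalift m (ω x) := by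
      simpa using LinearMap.congr_fun lemB (ω x)
    have hmm : convL m ((Coalgebra.comul : C →ₗ[k] C ⊗[k] C) c)
        = convR m ((Coalgebra.comul : C →ₗ[k] C ⊗[k] C) c) :=
      LinearMap.congr_fun hm' c
    have hd2 : d2 ρ m ν x = d2lift m ν (ρ x) := rfl
    have hz : zeta ω m x = zetalift m (ω x) := rfl
    rw [hExt]
    simp only [map_add, LinearMap.add_apply]
    rw [h1, h1', h2, h2', hmm, hd2, hz, neg_add, ← h3, ← hB']
    abel
  rw [convAssocWith_iff]
  constructor
  · intro h
    have h0 : ∀ x : X, (d2 ρ m ν + zeta ω m) x = 0 := by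
      intro x
      have := main 0 x
      rw [show extComul ρ ω ((0 : C), x) = extComul ρ ω (0, x) from rfl] at this
      have hLR : convL mt (extComul ρ ω (0, x)) = convR mt (extComul ρ ω (0, x)) := by
        have := LinearMap.congr_fun h ((0 : C), x)
        simpa using this
      rw [hLR, sub_self] at this
      exact (neg_eq_zero.mp this.symm)
    exact LinearMap.ext fun x => h0 x
  · intro h
    apply LinearMap.ext
    rintro ⟨c, x⟩
    have := main c x
    rw [h] at this
    simp only [LinearMap.zero_apply, neg_zero, sub_eq_zero] at this
    simpa using this
end

section
/- In the setting of an extension of cocommutative coalgebras C̃ = C⊕X with convolution-associative m : C → Hom(A⊗A,A): if m̃ : C̃ → Hom(A⊗A,A) is an associative deformation (m̃∘ι = m, convolution-associative), then for any ν ∈ Hom(X, Hom(A⊗A,A)), the map m̃_ν defined by m̃_ν(c,x) = m̃(c,x) + ν(x) is convolution-associative if and only if d_X^2(ν) = 0. -/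
open TensorProduct

noncomputable section DefCx2AuxSec

namespace DefCx2Aux

open TensorProduct LinearMap DefCx2

variable {k : Type*} [Field k]
variable {A : Type*} [AddCommGroup A] [Module k A]

/-- The bilinear "associator difference" on `Hom(A⊗A,A)`. -/
def Tb : (A ⊗[k] A →ₗ[k] A) →ₗ[k] (A ⊗[k] A →ₗ[k] A) →ₗ[k] ((A ⊗[k] A) ⊗[k] A →ₗ[k] A) :=
  LinearMap.mk₂ k
    (fun f g => f ∘ₗ LinearMap.rTensor A g
      - f ∘ₗ LinearMap.lTensor A g ∘ₗ (TensorProduct.assoc k A A A).toLinearMap)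
    (by intro f f' g; simp [LinearMap.add_comp]; abel)
    (by intro r f g; simp [LinearMap.smul_comp, smul_sub])
    (by intro f g g'
        simp [LinearMap.rTensor_add, LinearMap.lTensor_add, LinearMap.comp_add,
          LinearMap.add_comp]
        abel)
    (by intro r f g
        simp [LinearMap.rTensor_smul, LinearMap.lTensor_smul, LinearMap.comp_smul,
          LinearMap.smul_comp, smul_sub])

@[simp] lemma Tb_apply (f g : A ⊗[k] A →ₗ[k] A) :
    Tb f g = f ∘ₗ LinearMap.rTensor A g
      - f ∘ₗ LinearMap.lTensor A g ∘ₗ (TensorProduct.assoc k A A A).toLinearMap := rfl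

lemma lift_add' {M N P : Type*} [AddCommGroup M] [Module k M] [AddCommGroup N] [Module k N]
    [AddCommGroup P] [Module k P] (f g : M →ₗ[k] N →ₗ[k] P) :
    TensorProduct.lift (f + g) = TensorProduct.lift f + TensorProduct.lift g :=
  TensorProduct.ext' fun _ _ => by simp

lemma lift_zero' {M N P : Type*} [AddCommGroup M] [Module k M] [AddCommGroup N] [Module k N]
    [AddCommGroup P] [Module k P] :
    TensorProduct.lift (0 : M →ₗ[k] N →ₗ[k] P) = 0 :=
  TensorProduct.ext' fun _ _ => by simp

/-- ConvAssocWith rephrased through `Tb`. -/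
lemma convAssoc_iff {D : Type*} [AddCommGroup D] [Module k D]
    (Δ : D →ₗ[k] D ⊗[k] D) (μ : D →ₗ[k] (A ⊗[k] A →ₗ[k] A)) :
    ConvAssocWith Δ μ ↔ TensorProduct.lift (Tb.compl₁₂ μ μ) ∘ₗ Δ = 0 := by
  unfold ConvAssocWith
  rw [← sub_eq_zero, ← LinearMap.sub_comp]
  have e : ∀ P Q : D ⊗[k] D →ₗ[k] ((A ⊗[k] A) ⊗[k] A →ₗ[k] A),
      P = Q → (P ∘ₗ Δ = 0 ↔ Q ∘ₗ Δ = 0) := by rintro P Q rfl; exact Iff.rfl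
  apply e
  apply TensorProduct.ext'
  intro d d'
  simp [LinearMap.compl₁₂_apply]

end DefCx2Aux

end DefCx2AuxSec

open DefCx2 in
/-- In the setting of an extension of cocommutative coalgebras
`C̃ = C ⊕ X` with convolution-associative `m`: if `m̃` is an associative deformation of
`m` (i.e. `m̃ ∘ ι = m` and `m̃` is convolution-associative), then for any
`ν ∈ Hom(X, Hom(A⊗A,A))`, the perturbed map `m̃_ν(c,x) = m̃(c,x) + ν(x)` is
convolution-associative if and only if `d_X^2(ν) = 0`. -/
theorem perturbation_assoc_iff_cocycle {k : Type*} [Field k] {A C X : Type*}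
    [AddCommGroup A] [Module k A]
    [AddCommGroup C] [Module k C] [Coalgebra k C]
    [AddCommGroup X] [Module k X]
    (hcocomm : (TensorProduct.comm k C C).toLinearMap ∘ₗ
      (Coalgebra.comul : C →ₗ[k] C ⊗[k] C) = Coalgebra.comul)
    (ρ : X →ₗ[k] X ⊗[k] C)
    (hcoassoc : (TensorProduct.assoc k X C C).toLinearMap ∘ₗ LinearMap.rTensor C ρ ∘ₗ ρ =
      LinearMap.lTensor X (Coalgebra.comul : C →ₗ[k] C ⊗[k] C) ∘ₗ ρ)
    (hcounit : (TensorProduct.rid k X).toLinearMap ∘ₗ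
      LinearMap.lTensor X (Coalgebra.counit : C →ₗ[k] k) ∘ₗ ρ = LinearMap.id)
    (ω : X →ₗ[k] C ⊗[k] C)
    (hsymm : (TensorProduct.comm k C C).toLinearMap ∘ₗ ω = ω)
    (hnorm₁ : (TensorProduct.lid k C).toLinearMap ∘ₗ
      LinearMap.rTensor C (Coalgebra.counit : C →ₗ[k] k) ∘ₗ ω = 0)
    (hnorm₂ : (TensorProduct.rid k C).toLinearMap ∘ₗ
      LinearMap.lTensor C (Coalgebra.counit : C →ₗ[k] k) ∘ₗ ω = 0)
    (hcocycle : LinearMap.lTensor C ω ∘ₗ ((TensorProduct.comm k X C).toLinearMap ∘ₗ ρ)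
      - (TensorProduct.assoc k C C C).toLinearMap ∘ₗ
          LinearMap.rTensor C (Coalgebra.comul : C →ₗ[k] C ⊗[k] C) ∘ₗ ω
      + LinearMap.lTensor C (Coalgebra.comul : C →ₗ[k] C ⊗[k] C) ∘ₗ ω
      - (TensorProduct.assoc k C C C).toLinearMap ∘ₗ LinearMap.rTensor C ω ∘ₗ ρ = 0)
    (m : C →ₗ[k] (A ⊗[k] A →ₗ[k] A))
    (hm : ConvAssocWith (Coalgebra.comul : C →ₗ[k] C ⊗[k] C) m)
    (mt : (C × X) →ₗ[k] (A ⊗[k] A →ₗ[k] A))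
    (hrestrict : mt ∘ₗ LinearMap.inl k C X = m)
    (hassoc : ConvAssocWith (extComul ρ ω) mt) :
    ∀ ν : X →ₗ[k] (A ⊗[k] A →ₗ[k] A),
      ConvAssocWith (extComul ρ ω) (mt + ν ∘ₗ LinearMap.snd k C X) ↔ d2 ρ m ν = 0 := by
  intro ν
  open TensorProduct LinearMap DefCx2Aux in
  classical
  set νs : (C × X) →ₗ[k] (A ⊗[k] A →ₗ[k] A) := ν ∘ₗ LinearMap.snd k C X with hνs
  rw [convAssoc_iff] at hassoc
  rw [convAssoc_iff]
  have hν0 : ∀ c : C, νs (c, 0) = 0 := by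
    intro c; simp [hνs]
  have hmc : ∀ c : C, mt (c, 0) = m c := by
    intro c
    have := DFunLike.congr_fun hrestrict c
    simpa using this
  -- bilinear expansion
  have hbil : Tb.compl₁₂ (mt + νs) (mt + νs)
      = Tb.compl₁₂ mt mt + Tb.compl₁₂ mt νs + Tb.compl₁₂ νs mt + Tb.compl₁₂ νs νs := by
    refine LinearMap.ext fun d => LinearMap.ext fun d' => ?_
    simp [LinearMap.compl₁₂_apply, map_add, LinearMap.add_apply]
    abel
  -- decomposition of lift B ∘ extComul
  have hpiece : ∀ B : (C × X) →ₗ[k] (C × X) →ₗ[k] ((A ⊗[k] A) ⊗[k] A →ₗ[k] A),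
      TensorProduct.lift B ∘ₗ extComul ρ ω
        = TensorProduct.lift ((B ∘ₗ LinearMap.inl k C X).compl₂ (LinearMap.inl k C X)) ∘ₗ
            (Coalgebra.comul : C →ₗ[k] C ⊗[k] C) ∘ₗ LinearMap.fst k C X
        + TensorProduct.lift ((B ∘ₗ LinearMap.inl k C X).compl₂ (LinearMap.inr k C X)) ∘ₗ
            ((TensorProduct.comm k X C).toLinearMap ∘ₗ ρ) ∘ₗ LinearMap.snd k C X
        + TensorProduct.lift ((B ∘ₗ LinearMap.inr k C X).compl₂ (LinearMap.inl k C X)) ∘ₗ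
            ρ ∘ₗ LinearMap.snd k C X
        + TensorProduct.lift ((B ∘ₗ LinearMap.inl k C X).compl₂ (LinearMap.inl k C X)) ∘ₗ
            ω ∘ₗ LinearMap.snd k C X := by
    intro B
    unfold extComul
    simp only [LinearMap.comp_add, ← LinearMap.comp_assoc, TensorProduct.lift_comp_map]
  -- vanishing of pieces involving νs on the first slot against inl
  have hz_fst : ∀ (g : (C × X) →ₗ[k] (A ⊗[k] A →ₗ[k] A))
      (j : X →ₗ[k] (C × X)) ,
      ((Tb.compl₁₂ νs g ∘ₗ LinearMap.inl k C X).compl₂ j) = 0 := by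
    intro g j
    refine LinearMap.ext fun c => LinearMap.ext fun c' => ?_
    simp [LinearMap.compl₁₂_apply, hν0]
  have hz_fst' : ∀ (g : (C × X) →ₗ[k] (A ⊗[k] A →ₗ[k] A))
      (j : C →ₗ[k] (C × X)) ,
      ((Tb.compl₁₂ νs g ∘ₗ LinearMap.inl k C X).compl₂ j) = 0 := by
    intro g j
    refine LinearMap.ext fun c => LinearMap.ext fun c' => ?_
    simp [LinearMap.compl₁₂_apply, hν0]
  -- vanishing of pieces involving νs on the second slot against inl
  have hz_snd : ∀ (f : (C × X) →ₗ[k] (A ⊗[k] A →ₗ[k] A))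
      (i : X →ₗ[k] (C × X)),
      ((Tb.compl₁₂ f νs ∘ₗ i).compl₂ (LinearMap.inl k C X)) = 0 := by
    intro f i
    refine LinearMap.ext fun c => LinearMap.ext fun c' => ?_
    simp [LinearMap.compl₁₂_apply, hν0]
  have hz_snd' : ∀ (f : (C × X) →ₗ[k] (A ⊗[k] A →ₗ[k] A))
      (i : C →ₗ[k] (C × X)),
      ((Tb.compl₁₂ f νs ∘ₗ i).compl₂ (LinearMap.inl k C X)) = 0 := by
    intro f i
    refine LinearMap.ext fun c => LinearMap.ext fun c' => ?_
    simp [LinearMap.compl₁₂_apply, hν0]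
  -- the cross terms give -d2
  have hcross :
      TensorProduct.lift ((Tb.compl₁₂ mt νs ∘ₗ LinearMap.inl k C X).compl₂
          (LinearMap.inr k C X)) ∘ₗ (TensorProduct.comm k X C).toLinearMap
        + TensorProduct.lift ((Tb.compl₁₂ νs mt ∘ₗ LinearMap.inr k C X).compl₂
            (LinearMap.inl k C X))
        = -(TensorProduct.lift (LinearMap.mk₂ k
            (fun x c =>
              (m c) ∘ₗ LinearMap.lTensor A (ν x) ∘ₗ (TensorProduct.assoc k A A A).toLinearMap
              - (ν x) ∘ₗ LinearMap.rTensor A (m c)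
              + (ν x) ∘ₗ LinearMap.lTensor A (m c) ∘ₗ (TensorProduct.assoc k A A A).toLinearMap
              - (m c) ∘ₗ LinearMap.rTensor A (ν x))
            (by intro x y c
                simp [map_add, LinearMap.lTensor_add, LinearMap.rTensor_add,
                  LinearMap.add_comp, LinearMap.comp_add]
                abel)
            (by intro r x c
                simp [map_smul, LinearMap.lTensor_smul, LinearMap.rTensor_smul,
                  LinearMap.smul_comp, LinearMap.comp_smul, smul_sub, smul_add])
            (by intro x c c'
                simp [map_add, LinearMap.lTensor_add, LinearMap.rTensor_add,
                  LinearMap.add_comp, LinearMap.comp_add]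
                abel)
            (by intro r x c
                simp [map_smul, LinearMap.lTensor_smul, LinearMap.rTensor_smul,
                  LinearMap.smul_comp, LinearMap.comp_smul, smul_sub, smul_add]))) := by
    apply TensorProduct.ext'
    intro x c
    simp only [LinearMap.add_apply, LinearMap.comp_apply, LinearEquiv.coe_coe,
      TensorProduct.comm_tmul, TensorProduct.lift.tmul, LinearMap.compl₂_apply,
      LinearMap.compl₁₂_apply, LinearMap.mk₂_apply, LinearMap.neg_apply, hνs, hmc]
    simp only [LinearMap.coe_comp, Function.comp_apply, LinearMap.snd_apply,
      LinearMap.inr_apply, LinearMap.inl_apply, Tb_apply, hmc]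
    abel
  -- now compute the total map
  have hmain : TensorProduct.lift (Tb.compl₁₂ (mt + νs) (mt + νs)) ∘ₗ extComul ρ ω
      = TensorProduct.lift (Tb.compl₁₂ mt mt) ∘ₗ extComul ρ ω
        - d2 ρ m ν ∘ₗ LinearMap.snd k C X := by
    rw [hbil, lift_add', lift_add', lift_add', LinearMap.add_comp, LinearMap.add_comp,
      LinearMap.add_comp]
    rw [hpiece (Tb.compl₁₂ mt νs), hpiece (Tb.compl₁₂ νs mt), hpiece (Tb.compl₁₂ νs νs)]
    simp only [hz_fst, hz_fst', hz_snd, hz_snd', lift_zero', LinearMap.zero_comp,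
      add_zero, zero_add]
    rw [d2, sub_eq_add_neg, add_assoc]
    congr 1
    have h2 := congrArg (fun F => F ∘ₗ (ρ ∘ₗ LinearMap.snd k C X)) hcross
    simpa [LinearMap.add_comp, LinearMap.neg_comp, LinearMap.comp_assoc] using h2
  rw [hmain, hassoc, zero_sub, neg_eq_zero]
  constructor
  · intro h
    have : d2 ρ m ν ∘ₗ LinearMap.snd k C X ∘ₗ LinearMap.inr k C X = 0 := by
      rw [← LinearMap.comp_assoc, h, LinearMap.zero_comp]
    simpa using this
  · intro h; rw [h, LinearMap.zero_comp]
end
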